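/- arXiv:alg-geom/9602015 — 3 statements merged into one kernel-verified Lean document; each statement's English description precedes it below -/
import Mathlib

section
/- Let k be an infinite field and D a division ring that is a k-algebra with k contained in its centre. Let A = M_n(D) and let B be a dense k-subalgebra of A. Suppose m ≤ n and let V ⊆ M_{n×m}(D) be a B-submodule of the left A-module M_{n×m}(D) (A acting by matrix multiplication) such that the A-submodule generated by V is all of M_{n×m}(D). Then V contains a matrix X of rank m, i.e. a matrix whose m columns, regarded as elements of the right D-module D^n, are right D-linearly independent. -/
open Finset MulOpposite

namespace DenseRankAux

lemma op_sum {D : Type} [DivisionRing D] {ι : Type} (s : Finset ι) (f : ι → D) :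
    op (∑ i ∈ s, f i) = ∑ i ∈ s, op (f i) :=
  map_sum (opAddEquiv : D ≃+ Dᵐᵒᵖ) f s

variable {D : Type} [DivisionRing D] {n m : ℕ}

/-- Action of `M_n(D)` on columns `Fin n → Dᵐᵒᵖ`. -/
def aSMul (a : Matrix (Fin n) (Fin n) D) (u : Fin n → Dᵐᵒᵖ) : Fin n → Dᵐᵒᵖ :=
  fun i => ∑ l, u l * op (a i l)

instance instSMul : SMul (Matrix (Fin n) (Fin n) D) (Fin n → Dᵐᵒᵖ) := ⟨aSMul⟩

lemma aSMul_def (a : Matrix (Fin n) (Fin n) D) (u : Fin n → Dᵐᵒᵖ) (i : Fin n) :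
    (a • u) i = ∑ l, u l * op (a i l) := rfl

instance instModule : Module (Matrix (Fin n) (Fin n) D) (Fin n → Dᵐᵒᵖ) where
  one_smul u := by
    funext i
    simp [aSMul_def, Matrix.one_apply, apply_ite (op (α := D)), mul_ite]
  mul_smul a b u := by
    funext i
    simp only [aSMul_def, Matrix.mul_apply, op_sum, op_mul, Finset.mul_sum, Finset.sum_mul]
    rw [Finset.sum_comm]
    simp [mul_assoc]
  smul_zero a := by funext i; simp [aSMul_def]
  smul_add a u v := by
    funext i
    simp [aSMul_def, add_mul, Finset.sum_add_distrib]
  add_smul a b u := by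
    funext i
    simp [aSMul_def, Matrix.add_apply, mul_add, Finset.sum_add_distrib]
  zero_smul u := by funext i; simp [aSMul_def]

lemma smul_comm_op (a : Matrix (Fin n) (Fin n) D) (e : Dᵐᵒᵖ) (u : Fin n → Dᵐᵒᵖ) :
    a • (e • u) = e • (a • u) := by
  funext i
  simp [aSMul_def, Finset.mul_sum, mul_assoc]

/-- The action as a `Dᵐᵒᵖ`-linear map. -/
def aLin (a : Matrix (Fin n) (Fin n) D) : (Fin n → Dᵐᵒᵖ) →ₗ[Dᵐᵒᵖ] (Fin n → Dᵐᵒᵖ) where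
  toFun u := a • u
  map_add' u v := smul_add a u v
  map_smul' e u := smul_comm_op a e u

lemma exists_matrix_smul (hn : 0 < n) (u v : Fin n → Dᵐᵒᵖ) (hu : u ≠ 0) :
    ∃ a : Matrix (Fin n) (Fin n) D, a • u = v := by
  obtain ⟨i₀, hi₀⟩ : ∃ i₀, u i₀ ≠ 0 := by
    by_contra h; push_neg at h; exact hu (funext h)
  refine ⟨Matrix.of fun i l => if l = i₀ then unop ((u i₀)⁻¹ * v i) else 0, ?_⟩
  funext i
  rw [aSMul_def]
  have : ∀ l, u l * op ((Matrix.of fun i l => if l = i₀ then unop ((u i₀)⁻¹ * v i) else 0) i l)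
      = if l = i₀ then v i else 0 := by
    intro l
    by_cases h : l = i₀ <;> simp [h, ← mul_assoc, mul_inv_cancel₀ hi₀]
  rw [Finset.sum_congr rfl fun l _ => this l, Finset.sum_ite_eq' Finset.univ i₀]
  simp

lemma isSimpleModule (hn : 0 < n) :
    IsSimpleModule (Matrix (Fin n) (Fin n) D) (Fin n → Dᵐᵒᵖ) := by
  have : Nonempty (Fin n) := ⟨⟨0, hn⟩⟩
  have hnt : (⊥ : Submodule (Matrix (Fin n) (Fin n) D) (Fin n → Dᵐᵒᵖ)) ≠ ⊤ := by
    intro h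
    have h1 : (Pi.single (⟨0, hn⟩ : Fin n) (1 : Dᵐᵒᵖ)) ∈
        (⊥ : Submodule (Matrix (Fin n) (Fin n) D) (Fin n → Dᵐᵒᵖ)) := by
      rw [h]; trivial
    have h2 := (Submodule.mem_bot _).mp h1
    have h3 := congrFun h2 ⟨0, hn⟩
    simp at h3
  haveI : Nontrivial (Submodule (Matrix (Fin n) (Fin n) D) (Fin n → Dᵐᵒᵖ)) := ⟨⊥, ⊤, hnt⟩
  refine (isSimpleModule_iff _ _).mpr ⟨fun N => ?_⟩
  by_cases hN : N = ⊥
  · exact Or.inl hN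
  right
  obtain ⟨u, huN, hu⟩ := Submodule.exists_mem_ne_zero_of_ne_bot hN
  rw [eq_top_iff]
  intro v _
  obtain ⟨a, ha⟩ := exists_matrix_smul hn u v hu
  exact ha ▸ N.smul_mem a huN

lemma exists_smul_eq (hn : 0 < n)
    (f : (Fin n → Dᵐᵒᵖ) →ₗ[Matrix (Fin n) (Fin n) D] (Fin n → Dᵐᵒᵖ)) :
    ∃ e : Dᵐᵒᵖ, ∀ u, f u = e • u := by
  set i₀ : Fin n := ⟨0, hn⟩
  set ε : Fin n → Dᵐᵒᵖ := Pi.single i₀ 1 with hε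
  set φ := f ε with hφ
  set p : Matrix (Fin n) (Fin n) D := Matrix.of fun i l => if i = i₀ ∧ l = i₀ then 1 else 0 with hp
  have hpε : p • ε = ε := by
    funext i
    rw [aSMul_def]
    have : ∀ l, ε l * op (p i l) = if l = i₀ then (if i = i₀ then 1 else 0) else 0 := by
      intro l
      by_cases h : l = i₀
      · by_cases h2 : i = i₀ <;> simp [h, h2, hε, hp, Pi.single_apply]
      · simp [h, hε, hp, Pi.single_apply]
    rw [Finset.sum_congr rfl fun l _ => this l, Finset.sum_ite_eq' Finset.univ i₀]
    simp [hε, Pi.single_apply]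
  have hφeq : ∀ l, φ l = if l = i₀ then φ i₀ else 0 := by
    intro l
    conv_lhs => rw [hφ, ← hpε, f.map_smul, ← hφ]
    rw [aSMul_def]
    have : ∀ l', φ l' * op (p l l') = if l' = i₀ then (if l = i₀ then φ i₀ else 0) else 0 := by
      intro l'
      by_cases h : l' = i₀
      · by_cases h2 : l = i₀ <;> simp [h, h2, hp]
      · simp [h, hp]
    rw [Finset.sum_congr rfl fun l' _ => this l', Finset.sum_ite_eq' Finset.univ i₀]
    simp
  refine ⟨φ i₀, fun u => ?_⟩
  set a : Matrix (Fin n) (Fin n) D := Matrix.of fun i l => if l = i₀ then unop (u i) else 0 with ha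
  have haε : a • ε = u := by
    funext i
    rw [aSMul_def]
    have : ∀ l, ε l * op (a i l) = if l = i₀ then u i else 0 := by
      intro l
      by_cases h : l = i₀ <;> simp [h, hε, ha, Pi.single_apply]
    rw [Finset.sum_congr rfl fun l _ => this l, Finset.sum_ite_eq' Finset.univ i₀]
    simp
  calc f u = f (a • ε) := by rw [haε]
    _ = a • φ := by rw [f.map_smul, hφ]
    _ = φ i₀ • u := by
        funext i
        rw [aSMul_def]
        have : ∀ l, φ l * op (a i l) = if l = i₀ then φ i₀ * u i else 0 := by
          intro l
          by_cases h : l = i₀ <;> simp [h, hφeq l, ha]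
        rw [Finset.sum_congr rfl fun l _ => this l, Finset.sum_ite_eq' Finset.univ i₀]
        simp

/-- The columns of a rectangular matrix, as vectors over `Dᵐᵒᵖ`. -/
def colE (X : Matrix (Fin n) (Fin m) D) : Fin m → Fin n → Dᵐᵒᵖ := fun j i => op (X i j)

lemma colE_mul (a : Matrix (Fin n) (Fin n) D) (X : Matrix (Fin n) (Fin m) D) (j : Fin m) :
    colE (a * X) j = a • colE X j := by
  funext i
  rw [aSMul_def]
  simp only [colE, Matrix.mul_apply, op_sum, op_mul]

lemma colE_alg {k : Type} [Field k] [Algebra k D] (t : k) (X : Matrix (Fin n) (Fin m) D) (j : Fin m) :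
    colE (algebraMap k (Matrix (Fin n) (Fin n) D) t * X) j
      = algebraMap k Dᵐᵒᵖ t • colE X j := by
  funext i
  have hentry : (algebraMap k (Matrix (Fin n) (Fin n) D) t * X) i j = algebraMap k D t * X i j := by
    rw [Matrix.mul_apply]
    simp [Matrix.algebraMap_matrix_apply, ite_mul, Finset.sum_ite_eq]
  simp only [colE, hentry, Pi.smul_apply, op_mul, smul_eq_mul]
  rw [← MulOpposite.algebraMap_apply]
  exact (Algebra.commutes t (op (X i j))).symm

/-- Taking the linear combination of the columns with fixed coefficients `c`. -/
noncomputable def theta (c : Fin m → Dᵐᵒᵖ) : Matrix (Fin n) (Fin m) D →+ (Fin n → Dᵐᵒᵖ) where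
  toFun X := ∑ j, c j • colE X j
  map_zero' := by
    have h0 : ∀ j : Fin m, colE (0 : Matrix (Fin n) (Fin m) D) j = (0 : Fin n → Dᵐᵒᵖ) := by
      intro j; funext i; simp [colE]
    show ∑ j : Fin m, c j • colE (0 : Matrix (Fin n) (Fin m) D) j = 0
    rw [Finset.sum_congr rfl fun j _ => by rw [h0 j, smul_zero]]
    simp
  map_add' X Y := by
    show ∑ j : Fin m, c j • colE (X + Y) j = (∑ j : Fin m, c j • colE X j) + ∑ j : Fin m, c j • colE Y j
    rw [← Finset.sum_add_distrib]
    refine Finset.sum_congr rfl fun j _ => ?_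
    have : colE (X + Y) j = colE X j + colE Y j := by
      funext i; simp [colE, Matrix.add_apply]
    rw [this, smul_add]

lemma theta_mul (c : Fin m → Dᵐᵒᵖ) (a : Matrix (Fin n) (Fin n) D) (X : Matrix (Fin n) (Fin m) D) :
    theta c (a * X) = a • theta c X := by
  show ∑ j, c j • colE (a * X) j = a • ∑ j, c j • colE X j
  rw [Finset.smul_sum]
  refine Finset.sum_congr rfl fun j _ => ?_
  rw [colE_mul, smul_comm_op]

lemma eigen_indep {k E V : Type} [Field k] [DivisionRing E] [Algebra k E]
    [AddCommGroup V] [Module E V] (L : V →ₗ[E] V) :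
    ∀ (q : ℕ) (μ : Fin q → k), Function.Injective μ →
      ∀ c : Fin q → V, (∀ p, c p ≠ 0) →
      (∀ p, L (c p) = algebraMap k E (μ p) • c p) → LinearIndependent E c := by
  intro q
  induction q with
  | zero => exact fun _ _ _ _ _ => linearIndependent_empty_type
  | succ q IH =>
    intro μ hμ c hc0 hL
    rw [Fintype.linearIndependent_iff]
    intro g hg
    set ι : k →+* E := algebraMap k E with hι
    have h1 : ∑ p, (g p * ι (μ p)) • c p = 0 := by
      have := congrArg L hg
      rw [map_sum, map_zero] at this
      simpa only [map_smul, hL, smul_smul] using this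
    have h2 : ∑ p, (g p * ι (μ (Fin.last q))) • c p = 0 := by
      have := congrArg (fun x => ι (μ (Fin.last q)) • x) hg
      simp only [smul_zero, Finset.smul_sum, smul_smul] at this
      calc ∑ p, (g p * ι (μ (Fin.last q))) • c p
          = ∑ p, (ι (μ (Fin.last q)) * g p) • c p := by
            refine Finset.sum_congr rfl fun p _ => ?_
            rw [Algebra.commutes]
        _ = 0 := this
    have h3 : ∑ p, (g p * (ι (μ p) - ι (μ (Fin.last q)))) • c p = 0 := by
      have h12 : (∑ p, (g p * ι (μ p)) • c p) - (∑ p, (g p * ι (μ (Fin.last q))) • c p) = 0 := by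
        rw [h1, h2, sub_zero]
      rw [← Finset.sum_sub_distrib] at h12
      rw [Finset.sum_congr rfl fun p _ => by rw [mul_sub, sub_smul]]
      exact h12
    rw [Fin.sum_univ_castSucc] at h3
    simp only [sub_self, mul_zero, zero_smul, add_zero] at h3
    have hzero : ∀ p : Fin q,
        g (Fin.castSucc p) * (ι (μ (Fin.castSucc p)) - ι (μ (Fin.last q))) = 0 := by
      have hindep := IH (μ ∘ Fin.castSucc) (hμ.comp (Fin.castSucc_injective q))
        (c ∘ Fin.castSucc) (fun p => hc0 _) (fun p => hL _)
      exact Fintype.linearIndependent_iff.mp hindep _ h3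
    have hg0 : ∀ p : Fin q, g (Fin.castSucc p) = 0 := by
      intro p
      have hne : ι (μ (Fin.castSucc p)) - ι (μ (Fin.last q)) ≠ 0 := by
        rw [sub_ne_zero]
        intro h
        have := (algebraMap k E).injective h
        exact (Fin.castSucc_lt_last p).ne (hμ this)
      rcases mul_eq_zero.mp (hzero p) with h | h
      · exact h
      · exact absurd h hne
    have hlast : g (Fin.last q) = 0 := by
      rw [Fin.sum_univ_castSucc] at hg
      simp only [hg0, zero_smul, Finset.sum_const_zero, zero_add] at hg
      rcases smul_eq_zero.mp hg with h | h
      · exact h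
      · exact absurd h (hc0 _)
    intro p
    rcases Fin.eq_castSucc_or_eq_last p with ⟨p', rfl⟩ | rfl
    · exact hg0 p'
    · exact hlast

lemma exists_perturb {k E : Type} [Field k] [Infinite k] [DivisionRing E] [Algebra k E]
    {n s : ℕ} (a b : Fin s → Fin n → E) (ha : LinearIndependent E a) :
    ∃ t : k, t ≠ 0 ∧ LinearIndependent E (fun p => a p + algebraMap k E t • b p) := by
  by_contra hcon
  push_neg at hcon
  set ι : k →+* E := algebraMap k E with hι
  set W := Submodule.span E (Set.range a) with hW
  obtain ⟨W', hW'⟩ := Submodule.exists_isCompl W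
  set proj := W.projectionOnto W' hW' with hproj
  set bW := Module.Basis.span ha with hbW
  set π : (Fin n → E) →ₗ[E] (Fin s → E) := LinearMap.pi (fun j => bW.coord j ∘ₗ proj) with hπ
  have hπa : ∀ p, π (a p) = fun j => if p = j then 1 else 0 := by
    intro p
    funext j
    have h1 : a p = ((bW p : Fin n → E)) := (congrArg Subtype.val (Module.Basis.span_apply ha p)).symm
    simp only [hπ, LinearMap.pi_apply, LinearMap.comp_apply]
    rw [h1, Submodule.projectionOnto_apply_left, Module.Basis.coord_apply, Module.Basis.repr_self,
      Finsupp.single_apply]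
  set C : Fin s → Fin s → E := fun p j => π (b p) j with hC
  set L : (Fin s → E) →ₗ[E] (Fin s → E) :=
    { toFun := fun u j => ∑ p, u p * C p j
      map_add' := by
        intro u v; funext j; simp [add_mul, Finset.sum_add_distrib]
      map_smul' := by
        intro e u; funext j; simp [Finset.mul_sum, mul_assoc] } with hL
  have key : ∀ t : k, t ≠ 0 → ∃ g : Fin s → E, g ≠ 0 ∧ L g = ι (-t⁻¹) • g := by
    intro t ht
    obtain ⟨g, hgsum, i, hgi⟩ := Fintype.not_linearIndependent_iff.mp (hcon t ht)
    refine ⟨g, fun h => hgi (by rw [h]; rfl), ?_⟩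
    have hπ0 : π (∑ p, g p • (a p + ι t • b p)) = 0 := by rw [hgsum, map_zero]
    rw [map_sum] at hπ0
    simp only [map_smul, map_add, hπa] at hπ0
    have hco : ∀ j, g j + ι t * (L g) j = 0 := by
      intro j
      have := congrFun hπ0 j
      simp only [Finset.sum_apply, Pi.add_apply, Pi.smul_apply, smul_eq_mul, Pi.zero_apply] at this
      calc g j + ι t * (L g) j
          = ∑ p, g p * ((if p = j then 1 else 0) + ι t * π (b p) j) := by
            simp only [mul_add, Finset.sum_add_distrib, mul_ite, mul_one, mul_zero]
            congr 1
            · rw [Finset.sum_ite_eq' Finset.univ j]; simp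
            · simp only [hL, LinearMap.coe_mk, AddHom.coe_mk, Finset.mul_sum]
              refine Finset.sum_congr rfl fun p _ => ?_
              rw [← mul_assoc, ← mul_assoc, Algebra.commutes]
        _ = 0 := this
    have hιt : ι t ≠ 0 := by
      intro h
      exact ht ((algebraMap k E).injective (h.trans (map_zero (algebraMap k E)).symm))
    funext j
    have h2 : ι t * L g j = -(g j) := eq_neg_of_add_eq_zero_right (hco j)
    have h3 : L g j = (ι t)⁻¹ * (-(g j)) := (eq_inv_mul_iff_mul_eq₀ hιt).mpr h2
    rw [Pi.smul_apply, smul_eq_mul, map_neg, map_inv₀, h3]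
    simp [mul_neg, neg_mul]
  have hinf : ({0}ᶜ : Set k).Infinite := (Set.finite_singleton 0).infinite_compl
  obtain ⟨T, hTsub, hTcard⟩ := hinf.exists_subset_card_eq (s + 1)
  set eT := Finset.equivFinOfCardEq hTcard with heT
  set tt : Fin (s + 1) → k := fun p => (eT.symm p : k) with htt
  have htt0 : ∀ p, tt p ≠ 0 := by
    intro p
    have hmem := hTsub (eT.symm p).2
    simpa using hmem
  have httinj : Function.Injective tt := by
    intro p q h
    exact eT.symm.injective (Subtype.val_injective h)
  set μ : Fin (s + 1) → k := fun p => -(tt p)⁻¹ with hμ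
  have hμinj : Function.Injective μ := by
    intro p q h
    exact httinj (inv_injective (neg_injective h))
  choose g hg0 hgeig using fun p => key (tt p) (htt0 p)
  have hindep := eigen_indep L (s + 1) μ hμinj g hg0 hgeig
  have hcard := hindep.fintype_card_le_finrank
  rw [Module.finrank_pi, Fintype.card_fin, Fintype.card_fin] at hcard
  omega

end DenseRankAux

open DenseRankAux

/-- A subring `B` of a ring `A` is *dense* in `A` if every simple left `A`-module `U`
is simple as a `B`–`End_A U`-bimodule: the only additive subgroups of `U` stable under
the action of every element of `B` and under every `A`-linear endomorphism of `U`
are `⊥` and `⊤`. -/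
def IsDenseSubring (A : Type) [Ring A] (B : Subring A) : Prop :=
  ∀ (U : Type) [AddCommGroup U] [Module A U], IsSimpleModule A U →
    ∀ S : AddSubgroup U, (∀ b ∈ B, ∀ u ∈ S, b • u ∈ S) →
      (∀ f : U →ₗ[A] U, ∀ u ∈ S, f u ∈ S) → S = ⊥ ∨ S = ⊤

/-- Let `k` be an infinite field, `D` a division ring which is a `k`-algebra (so `k` is
central in `D`), `A = M_n(D)` and `B` a dense `k`-subalgebra of `A`.  If `m ≤ n` and
`V ⊆ M_{n×m}(D)` is a `B`-submodule of the left `A`-module `M_{n×m}(D)` which generates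
it as an `A`-module, then `V` contains a matrix of rank `m`, i.e. one whose `m` columns
are right `D`-linearly independent in the right `D`-module `D^n`. -/
theorem dense_subalgebra_submodule_contains_full_rank_matrix
    (k : Type) [Field k] [Infinite k] (D : Type) [DivisionRing D] [Algebra k D]
    (n m : ℕ) (hm : m ≤ n)
    (B : Subalgebra k (Matrix (Fin n) (Fin n) D))
    (hB : IsDenseSubring (Matrix (Fin n) (Fin n) D) B.toSubring)
    (V : AddSubgroup (Matrix (Fin n) (Fin m) D))
    (hV : ∀ b ∈ B, ∀ v ∈ V, b * v ∈ V)
    (hgen : ∀ S : AddSubgroup (Matrix (Fin n) (Fin m) D),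
      (∀ a : Matrix (Fin n) (Fin n) D, ∀ w ∈ S, a * w ∈ S) → V ≤ S → S = ⊤) :
    ∃ X ∈ V, ∀ c : Fin m → D, (∀ i : Fin n, ∑ j, X i j * c j = 0) → c = 0 := by
  classical
  rcases Nat.eq_zero_or_pos m with hm0 | hmpos
  · subst hm0
    exact ⟨0, V.zero_mem, fun c _ => funext fun j => j.elim0⟩
  have hn : 0 < n := lt_of_lt_of_le hmpos hm
  suffices h : ∃ X ∈ V, LinearIndependent Dᵐᵒᵖ (colE X) by
    obtain ⟨X, hXV, hX⟩ := h
    refine ⟨X, hXV, fun c hc => ?_⟩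
    have hsum : ∑ j, op (c j) • colE X j = 0 := by
      funext i
      rw [Finset.sum_apply]
      simp only [Pi.smul_apply, smul_eq_mul, colE, Pi.zero_apply]
      calc ∑ j, op (c j) * op (X i j) = op (∑ j, X i j * c j) := by
            rw [Finset.op_sum]
            exact Finset.sum_congr rfl fun j _ => (op_mul _ _).symm
        _ = 0 := by rw [hc i, op_zero]
    have hall := Fintype.linearIndependent_iff.mp hX (fun j => op (c j)) hsum
    funext j
    have hj := hall j
    simpa using congrArg unop hj
  by_contra hno
  push_neg at hno
  set rk : Matrix (Fin n) (Fin m) D → ℕ :=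
    fun X => Module.finrank Dᵐᵒᵖ (Submodule.span Dᵐᵒᵖ (Set.range (colE X))) with hrk
  have hrk_le : ∀ X, rk X ≤ m := by
    intro X
    have h1 := finrank_span_le_card (R := Dᵐᵒᵖ) (Set.range (colE X))
    have h2 : (Set.range (colE X)).toFinset.card ≤ m := by
      rw [Set.toFinset_range]
      exact (Finset.card_image_le).trans (by simp)
    exact h1.trans h2
  set RS : Set ℕ := rk '' ↑V with hRS
  have hne : RS.Nonempty := ⟨rk 0, 0, V.zero_mem, rfl⟩
  have hbdd : BddAbove RS := ⟨m, by rintro _ ⟨X, hX, rfl⟩; exact hrk_le X⟩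
  set r := sSup RS with hr
  obtain ⟨X₀, hX₀V, hX₀r⟩ := Nat.sSup_mem hne hbdd
  have hrmax : ∀ X ∈ V, rk X ≤ r := fun X hX => le_csSup hbdd ⟨X, hX, rfl⟩
  have hrm : r < m := by
    have h1 : rk X₀ ≠ m := by
      intro h
      apply hno X₀ hX₀V
      rw [linearIndependent_iff_card_eq_finrank_span, Fintype.card_fin]
      exact h.symm
    have h2 : rk X₀ ≤ m := hrk_le X₀
    omega
  obtain ⟨c, hcsum, j₀, hcj₀⟩ := Fintype.not_linearIndependent_iff.mp (hno X₀ hX₀V)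
  set W₀ := Submodule.span Dᵐᵒᵖ (Set.range (colE X₀)) with hW₀def
  have hW₀r : Module.finrank Dᵐᵒᵖ W₀ = r := hX₀r
  have hstep : ∃ Y ∈ V, theta c Y ∉ W₀ := by
    by_contra hall
    push_neg at hall
    have hZne : ∃ Y ∈ V, theta c Y ≠ 0 := by
      by_contra hz
      push_neg at hz
      have hker := hgen (theta c).ker
        (by
          intro a w hw
          rw [AddMonoidHom.mem_ker] at hw ⊢
          rw [theta_mul, hw, smul_zero])
        (by
          intro w hw
          rw [AddMonoidHom.mem_ker]
          exact hz w hw)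
      set i₀ : Fin n := ⟨0, hn⟩
      set Xt : Matrix (Fin n) (Fin m) D :=
        Matrix.of fun i j => if i = i₀ ∧ j = j₀ then 1 else 0 with hXt
      have hmem : Xt ∈ (theta c).ker := hker ▸ AddSubgroup.mem_top Xt
      have h0 : theta c Xt = 0 := AddMonoidHom.mem_ker.mp hmem
      have h1 := congrFun h0 i₀
      have h2 : theta c Xt i₀ = c j₀ := by
        show (∑ j, c j • colE Xt j) i₀ = c j₀
        rw [Finset.sum_apply]
        have hterm : ∀ j, (c j • colE Xt j) i₀ = if j = j₀ then c j else 0 := by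
          intro j
          by_cases h : j = j₀ <;> simp [h, colE, hXt, Pi.smul_apply]
        rw [Finset.sum_congr rfl fun j _ => hterm j, Finset.sum_ite_eq' Finset.univ j₀]
        simp
      rw [h2] at h1
      exact hcj₀ (h1.trans rfl)
    obtain ⟨Y₁, hY₁V, hY₁⟩ := hZne
    set Ssub := Submodule.span Dᵐᵒᵖ (⇑(theta c) '' (V : Set (Matrix (Fin n) (Fin m) D))) with hSsub
    have hdens := hB (Fin n → Dᵐᵒᵖ) (isSimpleModule hn) Ssub.toAddSubgroup
      (by
        intro b hb u hu
        rw [Submodule.mem_toAddSubgroup] at hu ⊢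
        have himg : Ssub.map (aLin b) ≤ Ssub := by
          rw [hSsub, Submodule.map_span]
          apply Submodule.span_le.mpr
          rintro _ ⟨_, ⟨Y, hY, rfl⟩, rfl⟩
          apply Submodule.subset_span
          refine ⟨b * Y, hV b (Subalgebra.mem_toSubring.mp hb) Y hY, ?_⟩
          show theta c (b * Y) = aLin b (theta c Y)
          rw [theta_mul]
          rfl
        exact himg ⟨u, hu, rfl⟩)
      (by
        intro f u hu
        rw [Submodule.mem_toAddSubgroup] at hu ⊢
        obtain ⟨e, he⟩ := exists_smul_eq hn f
        rw [he u]
        exact Ssub.smul_mem e hu)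
    rcases hdens with hbot | htop
    · have hZ1 : theta c Y₁ ∈ Ssub := Submodule.subset_span ⟨Y₁, hY₁V, rfl⟩
      have : theta c Y₁ ∈ Ssub.toAddSubgroup := (Submodule.mem_toAddSubgroup _).mpr hZ1
      rw [hbot] at this
      exact hY₁ (AddSubgroup.mem_bot.mp this)
    · have hSle : Ssub ≤ W₀ := Submodule.span_le.mpr (by rintro _ ⟨Y, hY, rfl⟩; exact hall Y hY)
      have hW₀top : W₀ = ⊤ := by
        rw [eq_top_iff]
        intro u _
        have : u ∈ Ssub.toAddSubgroup := htop ▸ AddSubgroup.mem_top u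
        exact hSle ((Submodule.mem_toAddSubgroup _).mp this)
      have hfr : Module.finrank Dᵐᵒᵖ W₀ = n := by
        rw [hW₀top, finrank_top, Module.finrank_pi, Fintype.card_fin]
      omega
  obtain ⟨Y, hYV, hzout⟩ := hstep
  set z := theta c Y with hzdef
  set v := colE X₀ with hv
  set y := colE Y with hy
  set ι := algebraMap k Dᵐᵒᵖ with hι
  have hsw : ∀ (t : k) (e : Dᵐᵒᵖ) (x : Fin n → Dᵐᵒᵖ), e • (ι t • x) = ι t • (e • x) := by
    intro t e x
    rw [smul_smul, smul_smul, Algebra.commutes]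
  set bw := Module.finBasisOfFinrankEq Dᵐᵒᵖ W₀ hW₀r with hbw
  have hbwmem : ∀ p : Fin r, ((bw p : Fin n → Dᵐᵒᵖ)) ∈ Submodule.span Dᵐᵒᵖ (Set.range v) :=
    fun p => (bw p).2
  choose d hd using fun p => (Submodule.mem_span_range_iff_exists_fun Dᵐᵒᵖ).mp (hbwmem p)
  set g : Fin r → Fin n → Dᵐᵒᵖ := fun p => ∑ j, d p j • y j with hgdef
  set aa : Fin (r + 1) → Fin n → Dᵐᵒᵖ := Fin.snoc (fun p => (bw p : Fin n → Dᵐᵒᵖ)) z with haa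
  set bb : Fin (r + 1) → Fin n → Dᵐᵒᵖ := Fin.snoc g 0 with hbb
  have haind : LinearIndependent Dᵐᵒᵖ aa := by
    rw [haa, linearIndependent_fin_snoc]
    constructor
    · exact bw.linearIndependent.map' W₀.subtype W₀.ker_subtype
    · have hspan : Submodule.span Dᵐᵒᵖ (Set.range fun p => (bw p : Fin n → Dᵐᵒᵖ)) = W₀ := by
        have hrange : (Set.range fun p => (bw p : Fin n → Dᵐᵒᵖ)) = W₀.subtype '' (Set.range bw) := by
          rw [← Set.range_comp]; rfl
        rw [hrange, ← Submodule.map_span, bw.span_eq, Submodule.map_subtype_top]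
      rw [hspan]
      exact hzout
  obtain ⟨t, ht0, hindep⟩ := exists_perturb (k := k) aa bb haind
  have hιt : ι t ≠ 0 := by
    intro hcontra
    exact ht0 ((algebraMap k Dᵐᵒᵖ).injective (hcontra.trans (map_zero (algebraMap k Dᵐᵒᵖ)).symm))
  set Xt := X₀ + algebraMap k (Matrix (Fin n) (Fin n) D) t * Y with hXtdef
  have hXtV : Xt ∈ V := V.add_mem hX₀V (hV _ (B.algebraMap_mem t) Y hYV)
  have hcolXt : ∀ j, colE Xt j = v j + ι t • y j := by
    intro j
    have hsplit : colE Xt j = colE X₀ j + colE (algebraMap k (Matrix (Fin n) (Fin n) D) t * Y) j := by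
      funext i; simp [colE, hXtdef, Matrix.add_apply]
    rw [hsplit, colE_alg]
  set Wt := Submodule.span Dᵐᵒᵖ (Set.range (colE Xt)) with hWtdef
  have hmemWt : ∀ p : Fin (r + 1), aa p + ι t • bb p ∈ Wt := by
    intro p
    rcases Fin.eq_castSucc_or_eq_last p with ⟨p', rfl⟩ | rfl
    · rw [haa, hbb, Fin.snoc_castSucc, Fin.snoc_castSucc]
      have hexp : (bw p' : Fin n → Dᵐᵒᵖ) + ι t • g p' = ∑ j, d p' j • colE Xt j := by
        rw [Finset.sum_congr rfl fun j _ => by rw [hcolXt j, smul_add]]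
        rw [Finset.sum_add_distrib, hd p']
        congr 1
        rw [hgdef, Finset.smul_sum]
        exact Finset.sum_congr rfl fun j _ => (hsw t (d p' j) (y j)).symm
      rw [hexp]
      exact Submodule.sum_mem _ fun j _ =>
        Submodule.smul_mem _ _ (Submodule.subset_span ⟨j, rfl⟩)
    · rw [haa, hbb, Fin.snoc_last, Fin.snoc_last, smul_zero, add_zero]
      have h1 : ∑ j, c j • colE Xt j = ι t • z := by
        rw [Finset.sum_congr rfl fun j _ => by rw [hcolXt j, smul_add]]
        rw [Finset.sum_add_distrib, hcsum, zero_add]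
        show ∑ j, c j • (ι t • y j) = ι t • ∑ j, c j • colE Y j
        rw [Finset.smul_sum]
        exact Finset.sum_congr rfl fun j _ => hsw t (c j) (y j)
      have h2 : ι t • z ∈ Wt := by
        rw [← h1]
        exact Submodule.sum_mem _ fun j _ =>
          Submodule.smul_mem _ _ (Submodule.subset_span ⟨j, rfl⟩)
      have h3 := Wt.smul_mem (ι t)⁻¹ h2
      rwa [smul_smul, inv_mul_cancel₀ hιt, one_smul] at h3
  have hle : Submodule.span Dᵐᵒᵖ (Set.range fun p => aa p + ι t • bb p) ≤ Wt :=
    Submodule.span_le.mpr (by rintro _ ⟨p, rfl⟩; exact hmemWt p)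
  have hfr : Module.finrank Dᵐᵒᵖ
      (Submodule.span Dᵐᵒᵖ (Set.range fun p => aa p + ι t • bb p)) = r + 1 := by
    rw [finrank_span_eq_card hindep, Fintype.card_fin]
  have hmono := Submodule.finrank_mono hle
  have hub : Module.finrank Dᵐᵒᵖ Wt ≤ r := hrmax Xt hXtV
  omega
end

section
/- Let Λ be a CM-algebra over R and Γ an overring of Λ. Let M, M′ ⊆ Γ^n be Λ-submodules (for the action of Λ through its image in Γ) such that the Γ-submodules of Γ^n generated by M and by M′ are both equal to Γ^n. Then M and M′ are isomorphic as Λ-modules if and only if there exists an automorphism σ of Γ^n as a Γ-module with σ(M) = M′. -/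
set_option synthInstance.maxHeartbeats 1000000
set_option maxHeartbeats 1000000

noncomputable section

/-- The completed algebra `Λ̂ = R̂ ⊗_R Λ`, where `R̂` is the `m`-adic completion of the
local ring `R`. -/
abbrev CompletedAlgebra (R : Type) [CommRing R] [IsLocalRing R]
    (Λ : Type) [Ring Λ] [Algebra R Λ] : Type :=
  TensorProduct R (AdicCompletion (IsLocalRing.maximalIdeal R) R) Λ

/-- `QΛ = Q ⊗_R Λ`, where `Q` is the total ring of fractions of `R`. -/
abbrev TotalFractionAlgebra (R : Type) [CommRing R]
    (Λ : Type) [Ring Λ] [Algebra R Λ] : Type :=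
  TensorProduct R (FractionRing R) Λ

/-- The canonical map `Λ → QΛ`, `x ↦ 1 ⊗ x`. -/
def inclQ (R : Type) [CommRing R] (Λ : Type) [Ring Λ] [Algebra R Λ] :
    Λ →+* TotalFractionAlgebra R Λ :=
  (Algebra.TensorProduct.includeRight (R := R) (A := FractionRing R) (B := Λ)).toRingHom

/-- A (1-dimensional, analytically reduced) CM-algebra over the local noetherian ring
`R`: `Λ` is a finitely generated torsion-free `R`-module and the completion
`Λ̂ = R̂ ⊗_R Λ` has no nonzero nilpotent two-sided ideal. -/
def IsCMAlgebra (R : Type) [CommRing R] [IsLocalRing R]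
    (Λ : Type) [Ring Λ] [Algebra R Λ] : Prop :=
  Module.Finite R Λ ∧
  (∀ r ∈ nonZeroDivisors R, Function.Injective fun x : Λ => r • x) ∧
  (∀ I : TwoSidedIdeal (CompletedAlgebra R Λ),
    (∃ N : ℕ, ∀ f : Fin (N + 1) → CompletedAlgebra R Λ,
      (∀ t, f t ∈ I) → (List.ofFn f).prod = 0) → I = ⊥)

/-- An overring of a CM-algebra `Λ`: a subring `Γ` of `QΛ` containing the image of `Λ`
which is finitely generated as a `Λ`-module. -/
def IsOverring (R : Type) [CommRing R] (Λ : Type) [Ring Λ] [Algebra R Λ]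
    (Γ : Subring (TotalFractionAlgebra R Λ)) : Prop :=
  (∀ x : Λ, inclQ R Λ x ∈ Γ) ∧
  ∃ s : Finset (TotalFractionAlgebra R Λ), (↑s : Set (TotalFractionAlgebra R Λ)) ⊆ Γ ∧
    ∀ x ∈ Γ, ∃ c : TotalFractionAlgebra R Λ → Λ,
      x = ∑ t ∈ s, inclQ R Λ (c t) * t

/-- `Γ^n ⊆ (QΛ)^n`, the additive subgroup of vectors with all coordinates in `Γ`. -/
def gammaPow (R : Type) [CommRing R] (Λ : Type) [Ring Λ] [Algebra R Λ]
    (Γ : Subring (TotalFractionAlgebra R Λ)) (n : ℕ) :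
    AddSubgroup (Fin n → TotalFractionAlgebra R Λ) :=
  AddSubgroup.pi Set.univ fun _ => Γ.toAddSubgroup

namespace CMAux
variable {R : Type} [CommRing R] {Λ : Type} [Ring Λ] [Algebra R Λ] {n : ℕ}
local notation "A'" => TotalFractionAlgebra R Λ
local notation "Q'" => FractionRing R
local notation "V" => (Fin n → TotalFractionAlgebra R Λ)

lemma inclQ_smul_one (r : R) : inclQ R Λ (r • (1:Λ)) = algebraMap R A' r := by
  show (1 : Q') ⊗ₜ[R] (r • (1:Λ)) = _
  rw [TensorProduct.tmul_smul, Algebra.algebraMap_eq_smul_one]; rfl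

lemma key_smul (r : R) (a : A') : inclQ R Λ (r • (1:Λ)) * a = r • a := by
  rw [inclQ_smul_one, ← Algebra.smul_def]


lemma inclQ_smul (r : R) (x : Λ) : inclQ R Λ (r • x) = r • inclQ R Λ x := by
  show (1 : Q') ⊗ₜ[R] (r • x) = r • ((1:Q') ⊗ₜ[R] x)
  rw [TensorProduct.tmul_smul]

lemma isUnit_den (q : nonZeroDivisors R) : IsUnit (algebraMap R Q' (q:R)) :=
  IsLocalization.map_units (M := nonZeroDivisors R) (S := Q') q

lemma inv_smul_den (q : nonZeroDivisors R) (X : V) :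
    Ring.inverse (algebraMap R Q' (q:R)) • ((q:R) • X) = X := by
  rw [← algebraMap_smul Q' (q:R) X, smul_smul, Ring.inverse_mul_cancel _ (isUnit_den q),
    one_smul]

lemma den_smul_inv (q : nonZeroDivisors R) (X : V) :
    (q:R) • (Ring.inverse (algebraMap R Q' (q:R)) • X) = X := by
  rw [← algebraMap_smul Q' (q:R) (Ring.inverse (algebraMap R Q' (q:R)) • X), smul_smul,
    Ring.mul_inverse_cancel _ (isUnit_den q), one_smul]

lemma den_cancel (q : nonZeroDivisors R) {X Y : V} (h : (q:R) • X = (q:R) • Y) : X = Y := by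
  rw [← inv_smul_den q X, h, inv_smul_den q Y]

variable {M M' : AddSubgroup (Fin n → TotalFractionAlgebra R Λ)}

/-- `M` is closed under the `R`-action. -/
lemma smul_mem' (hMmod : ∀ x : Λ, ∀ v ∈ M, (fun i => inclQ R Λ x * v i) ∈ M)
    (r : R) {v : V} (hv : v ∈ M) : r • v ∈ M := by
  have h := hMmod (r • (1:Λ)) v hv
  have : (fun i => inclQ R Λ (r • (1:Λ)) * v i) = r • v := by
    funext i; rw [key_smul]; rfl
  rwa [this] at h

def HasDen (M : AddSubgroup V) (v : V) : Prop := ∃ q : nonZeroDivisors R, (q:R) • v ∈ M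

def IsLamEq (e : ↥M ≃+ ↥M') : Prop :=
  ∀ (x : Λ) (v w : ↥M),
    (↑w : V) = (fun i => inclQ R Λ x * (↑v : V) i) →
    (↑(e w) : V) = fun i => inclQ R Λ x * (↑(e v) : V) i

lemma IsLamEq.rsmul {e : ↥M ≃+ ↥M'} (he : IsLamEq e) (r : R) (m : ↥M)
    (h : r • (↑m : V) ∈ M) :
    (↑(e ⟨r • (↑m : V), h⟩) : V) = r • (↑(e m) : V) := by
  have h0 : (↑(⟨r • (↑m : V), h⟩ : ↥M) : V) = fun i => inclQ R Λ (r • (1:Λ)) * (↑m : V) i := by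
    funext i; rw [key_smul]; rfl
  have h1 := he (r • (1:Λ)) m ⟨r • (↑m : V), h⟩ h0
  rw [h1]; funext i; rw [key_smul]; rfl

open Classical in
def sigmaAux (e : ↥M ≃+ ↥M') (v : V) : V :=
  if h : HasDen M v then
    Ring.inverse (algebraMap R Q' ((h.choose : nonZeroDivisors R) : R)) •
      (↑(e ⟨_, h.choose_spec⟩) : V)
  else 0

lemma sigmaAux_spec {e : ↥M ≃+ ↥M'} (he : IsLamEq e)
    (hMmod : ∀ x : Λ, ∀ v ∈ M, (fun i => inclQ R Λ x * v i) ∈ M)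
    {v : V} (q : nonZeroDivisors R) (hv : (q:R) • v ∈ M) :
    sigmaAux e v = Ring.inverse (algebraMap R Q' (q:R)) • (↑(e ⟨(q:R) • v, hv⟩) : V) := by
  have h : HasDen M v := ⟨q, hv⟩
  unfold sigmaAux
  rw [dif_pos h]
  set q' : nonZeroDivisors R := h.choose with hq'
  have hv' : (q':R) • v ∈ M := h.choose_spec
  -- key identity : q • X' = q' • X  where X' = e(q' v), X = e(q v)
  have h1 : (q:R) • ((q':R) • v) ∈ M := smul_mem' hMmod _ hv'
  have h2 : (q':R) • ((q:R) • v) ∈ M := smul_mem' hMmod _ hv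
  have e1 : (↑(e ⟨(q:R) • ((q':R) • v), h1⟩) : V) = (q:R) • (↑(e ⟨(q':R) • v, hv'⟩) : V) :=
    he.rsmul (q:R) ⟨(q':R) • v, hv'⟩ h1
  have e2 : (↑(e ⟨(q':R) • ((q:R) • v), h2⟩) : V) = (q':R) • (↑(e ⟨(q:R) • v, hv⟩) : V) :=
    he.rsmul (q':R) ⟨(q:R) • v, hv⟩ h2
  have hsame : (⟨(q:R) • ((q':R) • v), h1⟩ : ↥M) = ⟨(q':R) • ((q:R) • v), h2⟩ :=
    Subtype.ext (smul_comm _ _ _)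
  have key : (q:R) • (↑(e ⟨(q':R) • v, hv'⟩) : V) = (q':R) • (↑(e ⟨(q:R) • v, hv⟩) : V) := by
    rw [← e1, hsame, e2]
  -- now cancel
  set X' : V := (↑(e ⟨(q':R) • v, hv'⟩) : V)
  set X : V := (↑(e ⟨(q:R) • v, hv⟩) : V)
  have keyQ : algebraMap R Q' (q:R) • X' = algebraMap R Q' (q':R) • X := by
    rw [algebraMap_smul, algebraMap_smul]; exact key
  set a : Q' := algebraMap R Q' (q:R) with ha
  set a' : Q' := algebraMap R Q' (q':R) with ha'
  have hc := congrArg (fun Y : V => (Ring.inverse a * Ring.inverse a') • Y) keyQ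
  simp only [smul_smul] at hc
  have h5 : Ring.inverse a * Ring.inverse a' * a = Ring.inverse a' := by
    rw [mul_comm (Ring.inverse a) (Ring.inverse a'), mul_assoc,
      Ring.inverse_mul_cancel _ (isUnit_den q), mul_one]
  have h6 : Ring.inverse a * Ring.inverse a' * a' = Ring.inverse a := by
    rw [mul_assoc, Ring.inverse_mul_cancel _ (isUnit_den q'), mul_one]
  rw [h5, h6] at hc
  exact hc

lemma den_smul_sigmaAux {e : ↥M ≃+ ↥M'} (he : IsLamEq e)
    (hMmod : ∀ x : Λ, ∀ v ∈ M, (fun i => inclQ R Λ x * v i) ∈ M)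
    {v : V} (q : nonZeroDivisors R) (hv : (q:R) • v ∈ M) :
    (q:R) • sigmaAux e v = (↑(e ⟨(q:R) • v, hv⟩) : V) := by
  rw [sigmaAux_spec he hMmod q hv, den_smul_inv]

lemma sigmaAux_of_mem {e : ↥M ≃+ ↥M'} (he : IsLamEq e)
    (hMmod : ∀ x : Λ, ∀ v ∈ M, (fun i => inclQ R Λ x * v i) ∈ M)
    {v : V} (hv : v ∈ M) : sigmaAux e v = (↑(e ⟨v, hv⟩) : V) := by
  have h1 : ((1 : nonZeroDivisors R):R) • v ∈ M := by
    rw [OneMemClass.coe_one, one_smul]; exact hv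
  have h2 := den_smul_sigmaAux he hMmod 1 h1
  have h4 : (⟨((1 : nonZeroDivisors R):R) • v, h1⟩ : ↥M) = ⟨v, hv⟩ :=
    Subtype.ext (show ((1 : nonZeroDivisors R):R) • v = v by
      rw [OneMemClass.coe_one, one_smul])
  have h5 : (↑(e ⟨((1 : nonZeroDivisors R):R) • v, h1⟩) : V) = (↑(e ⟨v, hv⟩) : V) := by rw [h4]
  rw [← h5, ← h2, OneMemClass.coe_one, one_smul]

lemma hasDen_of_mem {v : V} (hv : v ∈ M) : HasDen M v :=
  ⟨1, by rw [OneMemClass.coe_one, one_smul]; exact hv⟩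

lemma hasDen_zero : HasDen M 0 := hasDen_of_mem (zero_mem M)

lemma hasDen_neg {v : V} (hv : HasDen M v) : HasDen M (-v) := by
  obtain ⟨q, hq⟩ := hv
  exact ⟨q, by rw [smul_neg]; exact neg_mem hq⟩

lemma hasDen_add (hMmod : ∀ x : Λ, ∀ v ∈ M, (fun i => inclQ R Λ x * v i) ∈ M)
    {v w : V} (hv : HasDen M v) (hw : HasDen M w) : HasDen M (v + w) := by
  obtain ⟨q, hq⟩ := hv
  obtain ⟨r, hr⟩ := hw
  refine ⟨q * r, ?_⟩
  have hsplit : ((q * r : nonZeroDivisors R) : R) • (v + w)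
      = (r:R) • ((q:R) • v) + (q:R) • ((r:R) • w) := by
    rw [Submonoid.coe_mul, smul_add, mul_smul, mul_smul, smul_comm (q:R) (r:R) v]
  rw [hsplit]
  exact add_mem (smul_mem' hMmod _ hq) (smul_mem' hMmod _ hr)

lemma hasDen_lambda (hMmod : ∀ x : Λ, ∀ v ∈ M, (fun i => inclQ R Λ x * v i) ∈ M)
    (x : Λ) {v : V} (hv : HasDen M v) : HasDen M (fun i => inclQ R Λ x * v i) := by
  obtain ⟨q, hq⟩ := hv
  refine ⟨q, ?_⟩
  have h1 : (q:R) • (fun i => inclQ R Λ x * v i) = fun i => inclQ R Λ x * ((q:R) • v) i := by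
    funext i
    show (q:R) • (inclQ R Λ x * v i) = inclQ R Λ x * ((q:R) • v i)
    rw [mul_smul_comm]
  rw [h1]
  exact hMmod x _ hq

lemma sigmaAux_add {e : ↥M ≃+ ↥M'} (he : IsLamEq e)
    (hMmod : ∀ x : Λ, ∀ v ∈ M, (fun i => inclQ R Λ x * v i) ∈ M)
    {v w : V} (hv : HasDen M v) (hw : HasDen M w) :
    sigmaAux e (v + w) = sigmaAux e v + sigmaAux e w := by
  obtain ⟨q, hq⟩ := hv
  obtain ⟨r, hr⟩ := hw
  have hq2 : (r:R) • ((q:R) • v) ∈ M := smul_mem' hMmod _ hq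
  have hr2 : (q:R) • ((r:R) • w) ∈ M := smul_mem' hMmod _ hr
  have hsplit : ((q * r : nonZeroDivisors R) : R) • (v + w)
      = (r:R) • ((q:R) • v) + (q:R) • ((r:R) • w) := by
    rw [Submonoid.coe_mul, smul_add, mul_smul, mul_smul, smul_comm (q:R) (r:R) v]
  have hqr : ((q * r : nonZeroDivisors R) : R) • (v + w) ∈ M := by
    rw [hsplit]; exact add_mem hq2 hr2
  apply den_cancel (q * r)
  rw [den_smul_sigmaAux he hMmod (q * r) hqr]
  have hsub : (⟨((q * r : nonZeroDivisors R) : R) • (v + w), hqr⟩ : ↥M)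
      = ⟨(r:R) • ((q:R) • v), hq2⟩ + ⟨(q:R) • ((r:R) • w), hr2⟩ :=
    Subtype.ext hsplit
  rw [hsub, map_add, AddSubgroup.coe_add,
    he.rsmul (r:R) ⟨(q:R) • v, hq⟩ hq2, he.rsmul (q:R) ⟨(r:R) • w, hr⟩ hr2,
    ← den_smul_sigmaAux he hMmod q hq, ← den_smul_sigmaAux he hMmod r hr,
    Submonoid.coe_mul, smul_add, mul_smul, mul_smul, smul_comm (q:R) (r:R) (sigmaAux e v)]

lemma sigmaAux_neg {e : ↥M ≃+ ↥M'} (he : IsLamEq e)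
    (hMmod : ∀ x : Λ, ∀ v ∈ M, (fun i => inclQ R Λ x * v i) ∈ M)
    {v : V} (hv : HasDen M v) : sigmaAux e (-v) = -sigmaAux e v := by
  obtain ⟨q, hq⟩ := hv
  have hq2 : (q:R) • (-v) ∈ M := by rw [smul_neg]; exact neg_mem hq
  apply den_cancel q
  rw [den_smul_sigmaAux he hMmod q hq2]
  have hsub : (⟨(q:R) • (-v), hq2⟩ : ↥M) = -⟨(q:R) • v, hq⟩ := Subtype.ext (smul_neg _ _)
  rw [hsub, map_neg, AddSubgroup.coe_neg, ← den_smul_sigmaAux he hMmod q hq, smul_neg]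

lemma sigmaAux_zero {e : ↥M ≃+ ↥M'} (he : IsLamEq e)
    (hMmod : ∀ x : Λ, ∀ v ∈ M, (fun i => inclQ R Λ x * v i) ∈ M) :
    sigmaAux e (0 : V) = 0 := by
  rw [sigmaAux_of_mem he hMmod (zero_mem M)]
  have h0 : (⟨(0:V), zero_mem M⟩ : ↥M) = 0 := rfl
  rw [h0, map_zero]
  rfl

lemma sigmaAux_lambda {e : ↥M ≃+ ↥M'} (he : IsLamEq e)
    (hMmod : ∀ x : Λ, ∀ v ∈ M, (fun i => inclQ R Λ x * v i) ∈ M)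
    (x : Λ) {v : V} (hv : HasDen M v) :
    sigmaAux e (fun i => inclQ R Λ x * v i) = fun i => inclQ R Λ x * sigmaAux e v i := by
  obtain ⟨q, hq⟩ := hv
  have h1 : (q:R) • (fun i => inclQ R Λ x * v i) = fun i => inclQ R Λ x * ((q:R) • v) i := by
    funext i
    show (q:R) • (inclQ R Λ x * v i) = inclQ R Λ x * ((q:R) • v i)
    rw [mul_smul_comm]
  have hq2 : (q:R) • (fun i => inclQ R Λ x * v i) ∈ M := by rw [h1]; exact hMmod x _ hq
  apply den_cancel q
  rw [den_smul_sigmaAux he hMmod q hq2]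
  have hsub : (⟨(q:R) • (fun i => inclQ R Λ x * v i), hq2⟩ : ↥M)
      = ⟨fun i => inclQ R Λ x * ((q:R) • v) i, hMmod x _ hq⟩ := Subtype.ext h1
  have h2 := he x ⟨(q:R) • v, hq⟩ ⟨fun i => inclQ R Λ x * ((q:R) • v) i, hMmod x _ hq⟩ rfl
  rw [hsub, h2, ← den_smul_sigmaAux he hMmod q hq]
  funext i
  show inclQ R Λ x * ((q:R) • sigmaAux e v i) = (q:R) • (inclQ R Λ x * sigmaAux e v i)
  rw [mul_smul_comm]

lemma sigmaAux_elem {e : ↥M ≃+ ↥M'} (he : IsLamEq e)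
    (hMmod : ∀ x : Λ, ∀ v ∈ M, (fun i => inclQ R Λ x * v i) ∈ M)
    {t : A'} (r : nonZeroDivisors R) {xt : Λ} (ht : (r:R) • t = inclQ R Λ xt)
    {v : V} (hv : HasDen M v) :
    HasDen M (fun i => t * v i) ∧
      sigmaAux e (fun i => t * v i) = fun i => t * sigmaAux e v i := by
  obtain ⟨q, hq⟩ := hv
  have h1 : ((r * q : nonZeroDivisors R) : R) • (fun i => t * v i)
      = fun i => inclQ R Λ xt * ((q:R) • v) i := by
    funext i
    show ((r:R) * (q:R)) • (t * v i) = inclQ R Λ xt * ((q:R) • v i)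
    rw [← ht, mul_smul, mul_smul_comm, smul_mul_assoc, smul_comm]
  have hmem : ((r * q : nonZeroDivisors R) : R) • (fun i => t * v i) ∈ M := by
    rw [h1]; exact hMmod xt _ hq
  refine ⟨⟨r * q, hmem⟩, ?_⟩
  apply den_cancel (r * q)
  rw [den_smul_sigmaAux he hMmod (r * q) hmem]
  have hsub : (⟨((r * q : nonZeroDivisors R) : R) • (fun i => t * v i), hmem⟩ : ↥M)
      = ⟨fun i => inclQ R Λ xt * ((q:R) • v) i, hMmod xt _ hq⟩ := Subtype.ext h1
  have h2 := he xt ⟨(q:R) • v, hq⟩ ⟨fun i => inclQ R Λ xt * ((q:R) • v) i, hMmod xt _ hq⟩ rfl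
  rw [hsub, h2, ← den_smul_sigmaAux he hMmod q hq]
  funext i
  show inclQ R Λ xt * ((q:R) • sigmaAux e v i)
      = ((r * q : nonZeroDivisors R) : R) • (t * sigmaAux e v i)
  rw [← ht, Submonoid.coe_mul, mul_smul, mul_smul_comm, smul_mul_assoc, smul_comm]

lemma exists_den_elem (a : A') : ∃ (r : nonZeroDivisors R) (x : Λ), (r:R) • a = inclQ R Λ x := by
  induction a using TensorProduct.induction_on with
  | zero => exact ⟨1, 0, by simp⟩
  | tmul p l =>
    obtain ⟨⟨x, s⟩, hx⟩ := IsLocalization.surj (M := nonZeroDivisors R) (S := Q') p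
    refine ⟨s, x • l, ?_⟩
    have h1 : (s:R) • (p ⊗ₜ[R] l : A') = ((s:R) • p) ⊗ₜ[R] l := by
      rw [TensorProduct.smul_tmul']
    have h2 : (s:R) • p = algebraMap R Q' x := by
      rw [Algebra.smul_def, mul_comm]; exact hx
    rw [h1, h2, Algebra.algebraMap_eq_smul_one]
    show (x • (1:Q')) ⊗ₜ[R] l = (1:Q') ⊗ₜ[R] (x • l)
    rw [TensorProduct.smul_tmul]
  | add a b ha hb =>
    obtain ⟨r1, x1, h1⟩ := ha
    obtain ⟨r2, x2, h2⟩ := hb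
    refine ⟨r1 * r2, (r2:R) • x1 + (r1:R) • x2, ?_⟩
    rw [Submonoid.coe_mul, smul_add, map_add]
    congr 1
    · show ((r1:R) * (r2:R)) • a = inclQ R Λ ((r2:R) • x1)
      rw [mul_comm, mul_smul, h1]
      show (r2:R) • ((1:Q') ⊗ₜ[R] x1) = (1:Q') ⊗ₜ[R] ((r2:R) • x1)
      rw [TensorProduct.tmul_smul]
    · show ((r1:R) * (r2:R)) • b = inclQ R Λ ((r1:R) • x2)
      rw [mul_smul, h2]
      show (r1:R) • ((1:Q') ⊗ₜ[R] x2) = (1:Q') ⊗ₜ[R] ((r1:R) • x2)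
      rw [TensorProduct.tmul_smul]

lemma exists_den_finset (s : Finset A') :
    ∃ r : nonZeroDivisors R, ∀ t ∈ s, ∃ x : Λ, (r:R) • t = inclQ R Λ x := by
  classical
  induction s using Finset.induction_on with
  | empty => exact ⟨1, by simp⟩
  | insert a s' hni ih =>
    obtain ⟨r, hr⟩ := ih
    obtain ⟨ra, xa, hxa⟩ := exists_den_elem a
    refine ⟨r * ra, ?_⟩
    intro t ht
    rcases Finset.mem_insert.mp ht with h | h
    · subst h
      refine ⟨(r:R) • xa, ?_⟩
      rw [Submonoid.coe_mul, mul_smul, hxa]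
      show (r:R) • ((1:Q') ⊗ₜ[R] xa) = (1:Q') ⊗ₜ[R] ((r:R) • xa)
      rw [TensorProduct.tmul_smul]
    · obtain ⟨x, hx⟩ := hr t h
      refine ⟨(ra:R) • x, ?_⟩
      rw [Submonoid.coe_mul, mul_comm, mul_smul, hx]
      show (ra:R) • ((1:Q') ⊗ₜ[R] x) = (1:Q') ⊗ₜ[R] ((ra:R) • x)
      rw [TensorProduct.tmul_smul]

lemma sigmaAux_finsetSum {e : ↥M ≃+ ↥M'} (he : IsLamEq e)
    (hMmod : ∀ x : Λ, ∀ v ∈ M, (fun i => inclQ R Λ x * v i) ∈ M)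
    {ι : Type} (s : Finset ι) (f : ι → V) (hf : ∀ i ∈ s, HasDen M (f i)) :
    HasDen M (∑ i ∈ s, f i) ∧
      sigmaAux e (∑ i ∈ s, f i) = ∑ i ∈ s, sigmaAux e (f i) := by
  classical
  induction s using Finset.induction_on with
  | empty => simpa using ⟨hasDen_zero, sigmaAux_zero he hMmod⟩
  | insert a s' hni ih =>
    have hfa : HasDen M (f a) := hf a (Finset.mem_insert_self a s')
    have hf' : ∀ i ∈ s', HasDen M (f i) := fun i hi => hf i (Finset.mem_insert_of_mem hi)
    obtain ⟨hd, hs⟩ := ih hf'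
    constructor
    · rw [Finset.sum_insert hni]
      exact hasDen_add hMmod hfa hd
    · rw [Finset.sum_insert hni, Finset.sum_insert hni,
        sigmaAux_add he hMmod hfa hd, hs]

lemma sigmaAux_gamma {e : ↥M ≃+ ↥M'} (he : IsLamEq e)
    (hMmod : ∀ x : Λ, ∀ v ∈ M, (fun i => inclQ R Λ x * v i) ∈ M)
    {Γ : Subring (TotalFractionAlgebra R Λ)} (hΓ : IsOverring R Λ Γ)
    {γ : A'} (hγ : γ ∈ Γ) {v : V} (hv : HasDen M v) :
    HasDen M (fun i => γ * v i) ∧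
      sigmaAux e (fun i => γ * v i) = fun i => γ * sigmaAux e v i := by
  obtain ⟨s, hsΓ, hrep⟩ := hΓ.2
  obtain ⟨r, hr⟩ := exists_den_finset s
  obtain ⟨c, hc⟩ := hrep γ hγ
  have hdecomp : (fun i => γ * v i)
      = ∑ t ∈ s, (fun i => inclQ R Λ (c t) * (t * v i)) := by
    funext i
    rw [Finset.sum_apply]
    rw [hc, Finset.sum_mul]
    exact Finset.sum_congr rfl fun t _ => mul_assoc _ _ _
  have hterm : ∀ t ∈ s, HasDen M (fun i => inclQ R Λ (c t) * (t * v i)) ∧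
      sigmaAux e (fun i => inclQ R Λ (c t) * (t * v i))
        = fun i => inclQ R Λ (c t) * (t * sigmaAux e v i) := by
    intro t ht
    obtain ⟨xt, hxt⟩ := hr t ht
    obtain ⟨hden_t, hval_t⟩ := sigmaAux_elem he hMmod r hxt hv
    constructor
    · exact hasDen_lambda hMmod (c t) hden_t
    · rw [sigmaAux_lambda he hMmod (c t) hden_t, hval_t]
  obtain ⟨hden, hval⟩ := sigmaAux_finsetSum he hMmod s _ (fun t ht => (hterm t ht).1)
  constructor
  · rw [hdecomp]; exact hden
  · rw [hdecomp, hval]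
    funext i
    rw [Finset.sum_apply]
    have : ∀ t ∈ s, sigmaAux e (fun i => inclQ R Λ (c t) * (t * v i)) i
        = inclQ R Λ (c t) * (t * sigmaAux e v i) := by
      intro t ht
      rw [(hterm t ht).2]
    rw [Finset.sum_congr rfl this, hc, Finset.sum_mul]
    exact (Finset.sum_congr rfl fun t _ => (mul_assoc _ _ _).symm)

lemma isLamEq_symm {e : ↥M ≃+ ↥M'} (he : IsLamEq e)
    (hMmod : ∀ x : Λ, ∀ v ∈ M, (fun i => inclQ R Λ x * v i) ∈ M) :
    IsLamEq e.symm := by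
  intro x v w hw
  set v0 : ↥M := e.symm v with hv0
  have hw0 : (fun i => inclQ R Λ x * (↑v0 : V) i) ∈ M := hMmod x _ v0.2
  set w0 : ↥M := ⟨fun i => inclQ R Λ x * (↑v0 : V) i, hw0⟩ with hw0'
  have h1 : (↑(e w0) : V) = fun i => inclQ R Λ x * (↑(e v0) : V) i := he x v0 w0 rfl
  have h2 : e v0 = v := e.apply_symm_apply v
  have h3 : (↑(e w0) : V) = (↑w : V) := by
    rw [h1, h2, hw]
  have h4 : e w0 = w := Subtype.ext h3
  have h5 : w0 = e.symm w := by rw [← h4, e.symm_apply_apply]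
  rw [← h5]

lemma tau_sigma {e : ↥M ≃+ ↥M'} (he : IsLamEq e) (he' : IsLamEq e.symm)
    (hMmod : ∀ x : Λ, ∀ v ∈ M, (fun i => inclQ R Λ x * v i) ∈ M)
    (hM'mod : ∀ x : Λ, ∀ v ∈ M', (fun i => inclQ R Λ x * v i) ∈ M')
    {v : V} (hv : HasDen M v) : sigmaAux e.symm (sigmaAux e v) = v := by
  obtain ⟨q, hq⟩ := hv
  have h1 : (q:R) • sigmaAux e v = (↑(e ⟨(q:R) • v, hq⟩) : V) :=
    den_smul_sigmaAux he hMmod q hq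
  have h2 : (q:R) • sigmaAux e v ∈ M' := by rw [h1]; exact (e ⟨(q:R) • v, hq⟩).2
  apply den_cancel q
  rw [den_smul_sigmaAux he' hM'mod q h2]
  have h3 : (⟨(q:R) • sigmaAux e v, h2⟩ : ↥M') = e ⟨(q:R) • v, hq⟩ := Subtype.ext h1
  rw [h3, AddEquiv.symm_apply_apply]

lemma mem_gammaPow {Γ : Subring (TotalFractionAlgebra R Λ)} {v : V} :
    v ∈ gammaPow R Λ Γ n ↔ ∀ i, v i ∈ Γ := by
  simp [gammaPow, AddSubgroup.mem_pi]


end CMAux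

/-- Proposition 2.5:  Let `Λ` be a CM-algebra, `Γ` an overring of `Λ` and
`M, M' ⊆ Γ^n` two `Λ`-submodules whose generated `Γ`-submodules are all of `Γ^n`.
Then `M ≅ M'` as `Λ`-modules if and only if there is an automorphism `σ` of `Γ^n`
as a `Γ`-module with `σ(M) = M'`. -/
theorem lambda_submodules_isomorphic_iff_gamma_automorphism
    (R : Type) [CommRing R] [IsLocalRing R] [IsNoetherianRing R]
    (hdim : ringKrullDim R = 1)
    (Λ : Type) [Ring Λ] [Algebra R Λ] (hCM : IsCMAlgebra R Λ)
    (Γ : Subring (TotalFractionAlgebra R Λ)) (hΓ : IsOverring R Λ Γ)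
    (n : ℕ)
    (M M' : AddSubgroup (Fin n → TotalFractionAlgebra R Λ))
    (hMmod : ∀ x : Λ, ∀ v ∈ M, (fun i => inclQ R Λ x * v i) ∈ M)
    (hM'mod : ∀ x : Λ, ∀ v ∈ M', (fun i => inclQ R Λ x * v i) ∈ M')
    (hMsub : ∀ v ∈ M, ∀ i, v i ∈ Γ)
    (hM'sub : ∀ v ∈ M', ∀ i, v i ∈ Γ)
    (hMgen : ∀ S : AddSubgroup (Fin n → TotalFractionAlgebra R Λ),
      (∀ γ ∈ Γ, ∀ v ∈ S, (fun i => γ * v i) ∈ S) → M ≤ S → gammaPow R Λ Γ n ≤ S)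
    (hM'gen : ∀ S : AddSubgroup (Fin n → TotalFractionAlgebra R Λ),
      (∀ γ ∈ Γ, ∀ v ∈ S, (fun i => γ * v i) ∈ S) → M' ≤ S → gammaPow R Λ Γ n ≤ S) :
    (∃ e : ↥M ≃+ ↥M', ∀ (x : Λ) (v w : ↥M),
        (↑w : Fin n → TotalFractionAlgebra R Λ) =
          (fun i => inclQ R Λ x * (↑v : Fin n → TotalFractionAlgebra R Λ) i) →
        (↑(e w) : Fin n → TotalFractionAlgebra R Λ) =
          fun i => inclQ R Λ x * (↑(e v) : Fin n → TotalFractionAlgebra R Λ) i) ↔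
    (∃ σ : ↥(gammaPow R Λ Γ n) ≃+ ↥(gammaPow R Λ Γ n),
      (∀ γ ∈ Γ, ∀ v w : ↥(gammaPow R Λ Γ n),
        (↑w : Fin n → TotalFractionAlgebra R Λ) =
          (fun i => γ * (↑v : Fin n → TotalFractionAlgebra R Λ) i) →
        (↑(σ w) : Fin n → TotalFractionAlgebra R Λ) =
          fun i => γ * (↑(σ v) : Fin n → TotalFractionAlgebra R Λ) i) ∧
      (∀ v : ↥(gammaPow R Λ Γ n),
        (↑v : Fin n → TotalFractionAlgebra R Λ) ∈ M ↔
        (↑(σ v) : Fin n → TotalFractionAlgebra R Λ) ∈ M')) := by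
  constructor
  · rintro ⟨e, he⟩
    have he : CMAux.IsLamEq e := he
    have he' : CMAux.IsLamEq e.symm := CMAux.isLamEq_symm he hMmod
    set S₁ : AddSubgroup (Fin n → TotalFractionAlgebra R Λ) :=
      { carrier := {v | CMAux.HasDen M v ∧ CMAux.sigmaAux e v ∈ gammaPow R Λ Γ n}
        zero_mem' := ⟨CMAux.hasDen_zero, by
          rw [CMAux.sigmaAux_zero he hMmod]; exact zero_mem _⟩
        add_mem' := fun ha hb => ⟨CMAux.hasDen_add hMmod ha.1 hb.1, by
          rw [CMAux.sigmaAux_add he hMmod ha.1 hb.1]; exact add_mem ha.2 hb.2⟩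
        neg_mem' := fun ha => ⟨CMAux.hasDen_neg ha.1, by
          rw [CMAux.sigmaAux_neg he hMmod ha.1]; exact neg_mem ha.2⟩ } with hS₁def
    have hS₁ : gammaPow R Λ Γ n ≤ S₁ := by
      apply hMgen
      · intro γ hγ v hvS
        obtain ⟨hden, hval⟩ := CMAux.sigmaAux_gamma he hMmod hΓ hγ hvS.1
        refine ⟨hden, ?_⟩
        rw [hval]
        exact CMAux.mem_gammaPow.mpr fun i =>
          mul_mem hγ (CMAux.mem_gammaPow.mp hvS.2 i)
      · intro m hm
        exact ⟨CMAux.hasDen_of_mem hm, by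
          rw [CMAux.sigmaAux_of_mem he hMmod hm]
          exact CMAux.mem_gammaPow.mpr fun i => hM'sub _ (e ⟨m, hm⟩).2 i⟩
    set S₂ : AddSubgroup (Fin n → TotalFractionAlgebra R Λ) :=
      { carrier := {v | CMAux.HasDen M' v ∧ CMAux.sigmaAux e.symm v ∈ gammaPow R Λ Γ n}
        zero_mem' := ⟨CMAux.hasDen_zero, by
          rw [CMAux.sigmaAux_zero he' hM'mod]; exact zero_mem _⟩
        add_mem' := fun ha hb => ⟨CMAux.hasDen_add hM'mod ha.1 hb.1, by
          rw [CMAux.sigmaAux_add he' hM'mod ha.1 hb.1]; exact add_mem ha.2 hb.2⟩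
        neg_mem' := fun ha => ⟨CMAux.hasDen_neg ha.1, by
          rw [CMAux.sigmaAux_neg he' hM'mod ha.1]; exact neg_mem ha.2⟩ } with hS₂def
    have hS₂ : gammaPow R Λ Γ n ≤ S₂ := by
      apply hM'gen
      · intro γ hγ v hvS
        obtain ⟨hden, hval⟩ := CMAux.sigmaAux_gamma he' hM'mod hΓ hγ hvS.1
        refine ⟨hden, ?_⟩
        rw [hval]
        exact CMAux.mem_gammaPow.mpr fun i =>
          mul_mem hγ (CMAux.mem_gammaPow.mp hvS.2 i)
      · intro m hm
        exact ⟨CMAux.hasDen_of_mem hm, by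
          rw [CMAux.sigmaAux_of_mem he' hM'mod hm]
          exact CMAux.mem_gammaPow.mpr fun i => hMsub _ (e.symm ⟨m, hm⟩).2 i⟩
    have he'' : CMAux.IsLamEq e.symm.symm := by
      rw [AddEquiv.symm_symm]; exact he
    refine ⟨⟨⟨fun v => ⟨CMAux.sigmaAux e ↑v, (hS₁ v.2).2⟩,
      fun v => ⟨CMAux.sigmaAux e.symm ↑v, (hS₂ v.2).2⟩, ?_, ?_⟩, ?_⟩, ?_, ?_⟩
    · intro v
      exact Subtype.ext (CMAux.tau_sigma he he' hMmod hM'mod (hS₁ v.2).1)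
    · intro v
      apply Subtype.ext
      have h := CMAux.tau_sigma he' he'' hM'mod hMmod (hS₂ v.2).1
      rwa [AddEquiv.symm_symm] at h
    · intro v w
      apply Subtype.ext
      show CMAux.sigmaAux e ↑(v + w) = CMAux.sigmaAux e ↑v + CMAux.sigmaAux e ↑w
      rw [AddSubgroup.coe_add]
      exact CMAux.sigmaAux_add he hMmod (hS₁ v.2).1 (hS₁ w.2).1
    · intro γ hγ v w hw
      show CMAux.sigmaAux e ↑w = fun i => γ * CMAux.sigmaAux e (↑v) i
      rw [hw]
      exact (CMAux.sigmaAux_gamma he hMmod hΓ hγ (hS₁ v.2).1).2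
    · intro v
      constructor
      · intro hvM
        show CMAux.sigmaAux e ↑v ∈ M'
        rw [CMAux.sigmaAux_of_mem he hMmod hvM]
        exact (e ⟨↑v, hvM⟩).2
      · intro h'
        have h'' : CMAux.sigmaAux e ↑v ∈ M' := h'
        have h1 := CMAux.sigmaAux_of_mem he' hM'mod h''
        have h2 := CMAux.tau_sigma he he' hMmod hM'mod (hS₁ v.2).1
        rw [h2] at h1
        rw [h1]
        exact (e.symm ⟨_, h''⟩).2
  · rintro ⟨σ, hσΓ, hσM⟩
    have memG : ∀ m : ↥M, (↑m : Fin n → TotalFractionAlgebra R Λ) ∈ gammaPow R Λ Γ n :=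
      fun m => CMAux.mem_gammaPow.mpr (hMsub ↑m m.2)
    have memG' : ∀ m : ↥M', (↑m : Fin n → TotalFractionAlgebra R Λ) ∈ gammaPow R Λ Γ n :=
      fun m => CMAux.mem_gammaPow.mpr (hM'sub ↑m m.2)
    have hσM' : ∀ u : ↥(gammaPow R Λ Γ n),
        (↑u : Fin n → TotalFractionAlgebra R Λ) ∈ M' ↔
        (↑(σ.symm u) : Fin n → TotalFractionAlgebra R Λ) ∈ M := by
      intro u
      have h := hσM (σ.symm u)
      rw [σ.apply_symm_apply] at h
      exact h.symm
    have cancel1 : ∀ (u : ↥(gammaPow R Λ Γ n))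
        (hu : (↑(σ u) : Fin n → TotalFractionAlgebra R Λ) ∈ gammaPow R Λ Γ n),
        σ.symm ⟨↑(σ u), hu⟩ = u := by
      intro u hu
      have h : (⟨(↑(σ u) : Fin n → TotalFractionAlgebra R Λ), hu⟩ : ↥(gammaPow R Λ Γ n))
          = σ u := Subtype.ext rfl
      rw [h, σ.symm_apply_apply]
    have cancel2 : ∀ (u : ↥(gammaPow R Λ Γ n))
        (hu : (↑(σ.symm u) : Fin n → TotalFractionAlgebra R Λ) ∈ gammaPow R Λ Γ n),
        σ ⟨↑(σ.symm u), hu⟩ = u := by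
      intro u hu
      have h : (⟨(↑(σ.symm u) : Fin n → TotalFractionAlgebra R Λ), hu⟩ : ↥(gammaPow R Λ Γ n))
          = σ.symm u := Subtype.ext rfl
      rw [h, σ.apply_symm_apply]
    refine ⟨⟨⟨fun m => ⟨↑(σ ⟨↑m, memG m⟩), (hσM ⟨↑m, memG m⟩).mp m.2⟩,
      fun m' => ⟨↑(σ.symm ⟨↑m', memG' m'⟩), (hσM' ⟨↑m', memG' m'⟩).mp m'.2⟩, ?_, ?_⟩, ?_⟩, ?_⟩
    · intro m
      apply Subtype.ext
      show (↑(σ.symm ⟨↑(σ ⟨↑m, memG m⟩), _⟩) : Fin n → TotalFractionAlgebra R Λ) = ↑m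
      rw [cancel1 ⟨↑m, memG m⟩]
    · intro m'
      apply Subtype.ext
      show (↑(σ ⟨↑(σ.symm ⟨↑m', memG' m'⟩), _⟩) : Fin n → TotalFractionAlgebra R Λ) = ↑m'
      rw [cancel2 ⟨↑m', memG' m'⟩]
    · intro m₁ m₂
      apply Subtype.ext
      show (↑(σ ⟨↑(m₁ + m₂), _⟩) : Fin n → TotalFractionAlgebra R Λ)
        = ↑(σ ⟨↑m₁, memG m₁⟩) + ↑(σ ⟨↑m₂, memG m₂⟩)
      have h : (⟨(↑(m₁ + m₂) : Fin n → TotalFractionAlgebra R Λ), memG (m₁ + m₂)⟩ :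
          ↥(gammaPow R Λ Γ n)) = ⟨↑m₁, memG m₁⟩ + ⟨↑m₂, memG m₂⟩ := Subtype.ext rfl
      rw [h, map_add]
      rfl
    · intro x v w hvw
      exact hσΓ (inclQ R Λ x) (hΓ.1 x) ⟨↑v, memG v⟩ ⟨↑w, memG w⟩ hvw
end
end

section
/- Let k be a field and let K and B be subfields of a field L, each containing k, such that L is the composite of K and B (i.e. L is generated as a field by K ∪ B) and the degree [L:K] = n is finite. Regard L, and hence B, as a subring of A = End_K(L) (which is isomorphic to M_n(K)) via the embedding sending x ∈ L to the K-linear map of multiplication by x. Then B is a dense subring of A. -/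
noncomputable section DenseAux

variable (K L : Type) [Field K] [Field L] [Algebra K L]

local notation "A'" => Module.End K L

theorem isSimpleModule_end_apply : IsSimpleModule (Module.End K L) L := by
  haveI : Nontrivial (Submodule (Module.End K L) L) := by
    refine ⟨⊥, ⊤, fun h => ?_⟩
    have : (1 : L) ∈ (⊤ : Submodule (Module.End K L) L) := trivial
    rw [← h, Submodule.mem_bot] at this
    exact one_ne_zero this
  refine (isSimpleModule_iff ..).2 ⟨fun W => ?_⟩
  rcases eq_or_ne W ⊥ with h | h
  · exact Or.inl h
  · refine Or.inr (Submodule.eq_top_iff'.2 fun x => ?_)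
    obtain ⟨w, hwW, hw0⟩ := (Submodule.ne_bot_iff W).1 h
    obtain ⟨g, hg⟩ : ∃ g : Module.Dual K L, g w ≠ 0 := by
      by_contra hcon
      push_neg at hcon
      exact hw0 ((Module.forall_dual_apply_eq_zero_iff K w).1 hcon)
    have := W.smul_mem (LinearMap.smulRight g ((g w)⁻¹ • x)) hwW
    rwa [Module.End.smul_def, LinearMap.smulRight_apply, smul_smul,
      mul_inv_cancel₀ hg, one_smul] at this

variable (U : Type) [AddCommGroup U] [Module (Module.End K L) U]

def phiMap (u : U) : A' →ₗ[A'] U where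
  toFun a := a • u
  map_add' a b := add_smul a b u
  map_smul' a b := mul_smul a b u

variable [FiniteDimensional K L]

def sigmaMap (b : Module.Basis (Fin (Module.finrank K L)) K L) (i : Fin (Module.finrank K L)) :
    L →ₗ[A'] A' where
  toFun x := b.constr K (Pi.single i x)
  map_add' x y := by
    show b.constr K (Pi.single i (x + y)) = b.constr K (Pi.single i x) + b.constr K (Pi.single i y)
    rw [Pi.single_add, map_add]
  map_smul' a x := by
    refine b.ext fun j => ?_
    have h1 : a • (b.constr K (Pi.single i x)) = a ∘ₗ b.constr K (Pi.single i x) := rfl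
    have h2 : a • x = a x := rfl
    rw [RingHom.id_apply, h1, h2, LinearMap.comp_apply, Module.Basis.constr_basis,
      Module.Basis.constr_basis]
    rcases eq_or_ne j i with rfl | h
    · simp
    · simp [Pi.single_apply, h]

theorem sum_sigma (b : Module.Basis (Fin (Module.finrank K L)) K L) :
    ∑ i, sigmaMap K L b i (b i) = (1 : A') := by
  refine b.ext fun j => ?_
  simp only [LinearMap.sum_apply, sigmaMap, LinearMap.coe_mk, AddHom.coe_mk,
    Module.Basis.constr_basis, Module.End.one_apply]
  rw [Finset.sum_eq_single j]
  · simp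
  · intro i _ h; simp [Pi.single_apply, h]
  · simp

theorem exists_equiv (hU : IsSimpleModule A' U) : Nonempty (L ≃ₗ[A'] U) := by
  haveI := hU
  haveI : IsSimpleModule A' L := isSimpleModule_end_apply K L
  haveI : Nontrivial U := IsSimpleModule.nontrivial A' U
  obtain ⟨u, hu⟩ := exists_ne (0 : U)
  set b := Module.finBasis K L
  have hne : ∃ i, (phiMap K L U u) ∘ₗ (sigmaMap K L b i) ≠ 0 := by
    by_contra hcon
    push_neg at hcon
    apply hu
    have h1 : u = (phiMap K L U u) (1 : A') := by simp [phiMap]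
    rw [h1, ← sum_sigma K L b, map_sum]
    refine Finset.sum_eq_zero fun i _ => ?_
    have := hcon i
    rw [LinearMap.ext_iff] at this
    simpa using this (b i)
  obtain ⟨i, hi⟩ := hne
  exact ⟨LinearEquiv.ofBijective _ (LinearMap.bijective_of_ne_zero hi)⟩

end DenseAux

theorem mem_ring_closure_of_comp (L : Type) [Field L] (K B : Subfield L)
    (hcomp : K ⊔ B = ⊤) [FiniteDimensional ↥K L] (x : L) :
    x ∈ Subring.closure ((K : Set L) ∪ (B : Set L)) := by
  have halg : ∀ y ∈ (B : Set L), IsAlgebraic ↥K y := fun y _ =>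
    (Algebra.IsAlgebraic.of_finite ↥K L).isAlgebraic y
  have htop : IntermediateField.adjoin ↥K (B : Set L) = ⊤ := by
    rw [eq_top_iff]
    intro y _
    have hy : y ∈ (⊤ : Subfield L) := trivial
    rw [← hcomp] at hy
    have hK : K ≤ (IntermediateField.adjoin ↥K (B : Set L)).toSubfield := by
      intro z hz
      exact IntermediateField.algebraMap_mem _ (⟨z, hz⟩ : K)
    have hB : B ≤ (IntermediateField.adjoin ↥K (B : Set L)).toSubfield := fun z hz =>
      IntermediateField.subset_adjoin _ _ hz
    exact (sup_le hK hB) hy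
  have h2 : Algebra.adjoin ↥K (B : Set L) = ⊤ := by
    have := IntermediateField.adjoin_toSubalgebra_of_isAlgebraic halg
    rw [htop] at this
    rw [← this]; rfl
  have hx : x ∈ Algebra.adjoin ↥K (B : Set L) := h2 ▸ trivial
  have := Algebra.adjoin_eq_ring_closure (R := ↥K) (B : Set L)
  rw [SetLike.ext_iff] at this
  have hx' := (this x).1 hx
  have hrange : Set.range (algebraMap ↥K L) = (K : Set L) := by
    ext z
    constructor
    · rintro ⟨⟨w, hw⟩, rfl⟩; exact hw
    · intro hz; exact ⟨⟨z, hz⟩, rfl⟩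
  rwa [hrange] at hx'

set_option maxHeartbeats 1600000 in
/-- Let `k ⊆ K, B ⊆ L` be subfields of a field `L` such that `L = K ⊔ B` is the composite
of `K` and `B` and `[L : K] = n` is finite.  Regarding `L` (hence `B`) as a subring of
`A = End_K(L) ≅ M_n(K)` via multiplication operators, `B` is a dense subring of `A`. -/
theorem subfield_composite_isDense (L : Type) [Field L] (k K B : Subfield L)
    (hkK : k ≤ K) (hkB : k ≤ B) (hcomp : K ⊔ B = ⊤)
    [FiniteDimensional ↥K L] (n : ℕ) (hn : Module.finrank ↥K L = n) :
    IsDenseSubring (Module.End ↥K L)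
      (((Algebra.lmul ↥K L).toRingHom.comp B.subtype).range) := by
  intro U _ _ hU S hB hf
  obtain ⟨e⟩ := exists_equiv ↥K L U hU
  -- the subring of "good" multipliers
  set M : Subring L :=
    { carrier := {x : L | ∀ v : L, e v ∈ S → e (x * v) ∈ S}
      one_mem' := by intro v hv; rwa [one_mul]
      mul_mem' := by
        intro x y hx hy v hv
        rw [mul_assoc]
        exact hx _ (hy _ hv)
      add_mem' := by
        intro x y hx hy v hv
        rw [add_mul, map_add]
        exact S.add_mem (hx _ hv) (hy _ hv)
      zero_mem' := by intro v hv; rw [zero_mul, map_zero]; exact S.zero_mem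
      neg_mem' := by
        intro x hx v hv
        rw [neg_mul, map_neg]
        exact S.neg_mem (hx _ hv) } with hM
  have hKM : (K : Set L) ⊆ (M : Set L) := by
    intro c hc v hv
    set a₀ : Module.End ↥K L := Algebra.lmul ↥K L c with ha₀
    have hcomm : ∀ a : Module.End ↥K L, a₀ * a = a * a₀ := by
      intro a
      ext y
      show a₀ (a y) = a (a₀ y)
      have h1 : a₀ y = (⟨c, hc⟩ : ↥K) • y := rfl
      have h2 : a₀ (a y) = (⟨c, hc⟩ : ↥K) • (a y) := rfl
      rw [h1, h2, map_smul]
    set F : U →ₗ[Module.End ↥K L] U :=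
      { toFun := fun w => a₀ • w
        map_add' := fun w₁ w₂ => smul_add a₀ w₁ w₂
        map_smul' := fun a w => by
          simp only [RingHom.id_apply]
          rw [← mul_smul, hcomm a, mul_smul] } with hF
    have hmem := hf F (e v) hv
    have : e (c * v) = F (e v) := by
      have h1 : c * v = a₀ • v := rfl
      rw [h1, map_smul]
      rfl
    rwa [this]
  have hBM : (B : Set L) ⊆ (M : Set L) := by
    intro x hx v hv
    have hmem : Algebra.lmul ↥K L x ∈
        (((Algebra.lmul ↥K L).toRingHom.comp B.subtype).range) := ⟨⟨x, hx⟩, rfl⟩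
    have := hB _ hmem (e v) hv
    have h1 : e (x * v) = (Algebra.lmul ↥K L x) • e v := by
      have h2 : x * v = (Algebra.lmul ↥K L x) • v := rfl
      rw [h2, map_smul]
    rwa [h1]
  have hall : ∀ x v : L, e v ∈ S → e (x * v) ∈ S := by
    intro x v hv
    have hx : x ∈ Subring.closure ((K : Set L) ∪ (B : Set L)) :=
      mem_ring_closure_of_comp L K B hcomp x
    have hle : Subring.closure ((K : Set L) ∪ (B : Set L)) ≤ M :=
      Subring.closure_le.2 (Set.union_subset hKM hBM)
    exact hle hx v hv
  rcases eq_or_ne S ⊥ with h | h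
  · exact Or.inl h
  · refine Or.inr ?_
    obtain ⟨w, hwS, hw0⟩ : ∃ w ∈ S, w ≠ 0 := by
      by_contra hcon
      push_neg at hcon
      exact h (AddSubgroup.eq_bot_iff_forall S |>.2 hcon)
    set v : L := e.symm w with hv
    have hev : e v ∈ S := by
      rw [hv, LinearEquiv.apply_symm_apply]
      exact hwS
    have hv0 : v ≠ 0 := by
      intro hc
      apply hw0
      rw [← LinearEquiv.apply_symm_apply e w, ← hv, hc, map_zero]
    rw [eq_top_iff]
    intro y _
    have := hall (e.symm y * v⁻¹) v hev
    rwa [mul_assoc, inv_mul_cancel₀ hv0, mul_one, LinearEquiv.apply_symm_apply] at this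
end
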